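/- arXiv:2504.09009 — 3 statements merged into one kernel-verified Lean document; each statement's English description precedes it below -/
import Mathlib

section
/- Let G be the cumulative distribution function of a normal distribution N(μ, σ²) truncated to an interval [a, b] with a < b and σ > 0. Then for every fixed x ∈ (a, b), the map μ ↦ G(x) (as a function of the location parameter μ, with σ, a, b, x fixed) is continuous and strictly decreasing in μ. -/
open MeasureTheory ProbabilityTheory

/-- The standard normal cumulative distribution function `Φ`. -/
noncomputable def stdNormalCDF (x : ℝ) : ℝ :=
  ProbabilityTheory.cdf (gaussianReal 0 1) x

/-- CDF of the normal `N(μ, σ²)` truncated to the interval `[a, b]`. -/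
noncomputable def truncNormalCDF (μ σ a b x : ℝ) : ℝ :=
  (stdNormalCDF ((x - μ) / σ) - stdNormalCDF ((a - μ) / σ)) /
    (stdNormalCDF ((b - μ) / σ) - stdNormalCDF ((a - μ) / σ))

namespace TruncAux

noncomputable def φ : ℝ → ℝ := gaussianPDFReal 0 1

lemma φ_cont : Continuous φ := by
  unfold φ gaussianPDFReal
  fun_prop

lemma φ_pos (t : ℝ) : 0 < φ t := gaussianPDFReal_pos 0 1 t one_ne_zero

lemma intInt (p q : ℝ) : IntervalIntegrable φ volume p q :=
  (integrable_gaussianPDFReal 0 1).intervalIntegrable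

lemma tφ_int (p q : ℝ) : IntervalIntegrable (fun t => t * φ t) volume p q :=
  (show Continuous fun t : ℝ => t * φ t from continuous_id.mul φ_cont).intervalIntegrable _ _

lemma cdf_sub {p q : ℝ} (hpq : p ≤ q) :
    stdNormalCDF q - stdNormalCDF p = ∫ t in p..q, φ t := by
  have hmeas : (gaussianReal 0 1) (Set.Iic q)
      = (gaussianReal 0 1) (Set.Iic p) + (gaussianReal 0 1) (Set.Ioc p q) := by
    rw [← measure_union (Set.Iic_disjoint_Ioc le_rfl) measurableSet_Ioc,
      Set.Iic_union_Ioc_eq_Iic hpq]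
  have h1 : stdNormalCDF q - stdNormalCDF p
      = ((gaussianReal 0 1) (Set.Ioc p q)).toReal := by
    rw [stdNormalCDF, stdNormalCDF, cdf_eq_real, cdf_eq_real, measureReal_def, measureReal_def, hmeas,
      ENNReal.toReal_add (measure_ne_top _ _) (measure_ne_top _ _)]
    ring
  rw [h1, gaussianReal_apply_eq_integral 0 one_ne_zero,
    ENNReal.toReal_ofReal (setIntegral_nonneg measurableSet_Ioc
      fun t _ => gaussianPDFReal_nonneg 0 1 t),
    intervalIntegral.integral_of_le hpq]
  rfl

lemma cdf_eq (y : ℝ) :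
    stdNormalCDF y = stdNormalCDF 0 + ∫ t in (0:ℝ)..y, φ t := by
  rcases le_total 0 y with h | h
  · have := cdf_sub h; linarith
  · have := cdf_sub h
    rw [intervalIntegral.integral_symm]
    linarith

lemma hasDeriv_cdf (y : ℝ) : HasDerivAt stdNormalCDF (φ y) y := by
  have h := intervalIntegral.integral_hasDerivAt_right (intInt 0 y)
    (φ_cont.stronglyMeasurableAtFilter _ _) φ_cont.continuousAt
  have hfun : stdNormalCDF = fun u => stdNormalCDF 0 + ∫ t in (0:ℝ)..u, φ t :=
    funext cdf_eq
  rw [hfun]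
  exact h.const_add _

lemma hasDeriv_φ (t : ℝ) : HasDerivAt φ (-t * φ t) t := by
  have h1 : HasDerivAt (fun s : ℝ => -(s - 0) ^ 2 / (2 * ((1:NNReal):ℝ))) (-t) t := by
    have h := (((hasDerivAt_id t).sub_const 0).pow 2).neg.div_const (2 * ((1:NNReal):ℝ))
    refine h.congr_deriv ?_
    simp only [id_eq]
    push_cast
    ring
  have h2 := h1.exp.const_mul (Real.sqrt (2 * Real.pi * ((1:NNReal):ℝ)))⁻¹
  have hfun : φ = fun s : ℝ =>
      (Real.sqrt (2 * Real.pi * ((1:NNReal):ℝ)))⁻¹ *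
        Real.exp (-(s - 0) ^ 2 / (2 * ((1:NNReal):ℝ))) := by
    funext s; rfl
  rw [hfun]
  refine h2.congr_deriv ?_
  ring

lemma integral_tφ (p q : ℝ) : ∫ t in p..q, t * φ t = φ p - φ q := by
  rw [intervalIntegral.integral_eq_sub_of_hasDerivAt
    (f := fun s => -φ s)
    (fun t _ => by simpa [neg_mul, neg_neg] using (hasDeriv_φ t).fun_neg)
    (tφ_int p q)]
  ring

lemma int_pos {p q : ℝ} (h : p < q) : 0 < ∫ t in p..q, φ t :=
  intervalIntegral.intervalIntegral_pos_of_pos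
    (f := φ) (intInt p q) (fun t => φ_pos t) h

lemma int_tφ_lt {p m : ℝ} (h : p < m) :
    ∫ t in p..m, t * φ t < m * ∫ t in p..m, φ t := by
  have hpos : 0 < ∫ t in p..m, (m - t) * φ t := by
    refine intervalIntegral.intervalIntegral_pos_of_pos_on
      ((show Continuous fun t : ℝ => (m - t) * φ t from
        (continuous_const.sub continuous_id).mul φ_cont).intervalIntegrable _ _)
      (fun t ht => mul_pos (by linarith [ht.2]) (φ_pos t)) h
  have hsplit : ∫ t in p..m, (m - t) * φ t
      = (∫ t in p..m, m * φ t) - ∫ t in p..m, t * φ t := by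
    rw [← intervalIntegral.integral_sub
      ((show Continuous fun t : ℝ => m * φ t from continuous_const.mul φ_cont).intervalIntegrable _ _)
      (tφ_int p m)]
    congr 1
    funext t
    ring
  have hconst : ∫ t in p..m, m * φ t = m * ∫ t in p..m, φ t :=
    intervalIntegral.integral_const_mul m φ
  linarith

lemma int_tφ_gt {m q : ℝ} (h : m < q) :
    m * ∫ t in m..q, φ t < ∫ t in m..q, t * φ t := by
  have hpos : 0 < ∫ t in m..q, (t - m) * φ t := by
    refine intervalIntegral.intervalIntegral_pos_of_pos_on
      ((show Continuous fun t : ℝ => (t - m) * φ t from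
        (continuous_id.sub continuous_const).mul φ_cont).intervalIntegrable _ _)
      (fun t ht => mul_pos (by linarith [ht.1]) (φ_pos t)) h
  have hsplit : ∫ t in m..q, (t - m) * φ t
      = (∫ t in m..q, t * φ t) - ∫ t in m..q, m * φ t := by
    rw [← intervalIntegral.integral_sub (tφ_int m q)
      ((show Continuous fun t : ℝ => m * φ t from continuous_const.mul φ_cont).intervalIntegrable _ _)]
    congr 1
    funext t
    ring
  have hconst : ∫ t in m..q, m * φ t = m * ∫ t in m..q, φ t :=
    intervalIntegral.integral_const_mul m φ
  linarith

lemma key {p m q : ℝ} (hpm : p < m) (hmq : m < q) :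
    (φ p - φ m) * (∫ t in p..q, φ t) < (∫ t in p..m, φ t) * (φ p - φ q) := by
  rw [← integral_tφ p m, ← integral_tφ p q]
  rw [← intervalIntegral.integral_add_adjacent_intervals (intInt p m) (intInt m q),
    ← intervalIntegral.integral_add_adjacent_intervals (tφ_int p m) (tφ_int m q)]
  have hA := int_pos hpm
  have hB := int_pos hmq
  have hS := int_tφ_lt hpm
  have hT := int_tφ_gt hmq
  nlinarith [mul_lt_mul_of_pos_right hS hB, mul_lt_mul_of_pos_left hT hA]

end TruncAux

open TruncAux in
/-- For fixed `σ > 0`, `a < b` and `x ∈ (a, b)`, the truncated normal CDF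
`μ ↦ G_{μ,σ}^{[a,b]}(x)` is continuous and strictly decreasing in the location
parameter `μ`. -/
theorem stmt2 (σ a b x : ℝ) (hσ : 0 < σ) (hab : a < b) (hx : x ∈ Set.Ioo a b) :
    Continuous (fun μ => truncNormalCDF μ σ a b x) ∧
      StrictAnti (fun μ => truncNormalCDF μ σ a b x) := by
  obtain ⟨hax, hxb⟩ := hx
  have hu1 : ∀ μ : ℝ, (a - μ) / σ < (x - μ) / σ := fun μ => by gcongr <;> linarith
  have hu2 : ∀ μ : ℝ, (x - μ) / σ < (b - μ) / σ := fun μ => by gcongr <;> linarith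
  have hD : ∀ μ : ℝ, 0 < stdNormalCDF ((b - μ) / σ) - stdNormalCDF ((a - μ) / σ) := by
    intro μ
    rw [cdf_sub ((hu1 μ).trans (hu2 μ)).le]
    exact int_pos ((hu1 μ).trans (hu2 μ))
  have hinner : ∀ t : ℝ, ∀ μ : ℝ, HasDerivAt (fun μ : ℝ => (t - μ) / σ) (-1 / σ) μ := by
    intro t μ
    simpa using ((hasDerivAt_id μ).const_sub t).div_const σ
  have hF : ∀ t : ℝ, ∀ μ : ℝ,
      HasDerivAt (fun μ : ℝ => stdNormalCDF ((t - μ) / σ)) (φ ((t - μ) / σ) * (-1 / σ)) μ :=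
    fun t μ => (hasDeriv_cdf ((t - μ) / σ)).comp μ (hinner t μ)
  have hG : ∀ μ : ℝ, HasDerivAt (fun μ => truncNormalCDF μ σ a b x)
      (((φ ((x - μ) / σ) * (-1 / σ) - φ ((a - μ) / σ) * (-1 / σ)) *
          (stdNormalCDF ((b - μ) / σ) - stdNormalCDF ((a - μ) / σ)) -
        (stdNormalCDF ((x - μ) / σ) - stdNormalCDF ((a - μ) / σ)) *
          (φ ((b - μ) / σ) * (-1 / σ) - φ ((a - μ) / σ) * (-1 / σ))) /
        (stdNormalCDF ((b - μ) / σ) - stdNormalCDF ((a - μ) / σ)) ^ 2) μ := by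
    intro μ
    exact ((hF x μ).sub (hF a μ)).div ((hF b μ).sub (hF a μ)) (hD μ).ne'
  constructor
  · have hdiff : Differentiable ℝ (fun μ => truncNormalCDF μ σ a b x) :=
      fun y => (hG y).differentiableAt
    exact hdiff.continuous
  · refine strictAnti_of_hasDerivAt_neg hG ?_
    intro μ
    have hkey := key (hu1 μ) (hu2 μ)
    have hNum : stdNormalCDF ((x - μ) / σ) - stdNormalCDF ((a - μ) / σ)
        = ∫ t in (a - μ) / σ..(x - μ) / σ, φ t := cdf_sub (hu1 μ).le
    have hDen : stdNormalCDF ((b - μ) / σ) - stdNormalCDF ((a - μ) / σ)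
        = ∫ t in (a - μ) / σ..(b - μ) / σ, φ t := cdf_sub ((hu1 μ).trans (hu2 μ)).le
    apply div_neg_of_neg_of_pos
    · rw [hNum, hDen]
      set P := ∫ t in (a - μ) / σ..(x - μ) / σ, φ t with hP
      set Q := ∫ t in (a - μ) / σ..(b - μ) / σ, φ t with hQ
      set A := φ ((a - μ) / σ) with hA
      set X := φ ((x - μ) / σ) with hX
      set B := φ ((b - μ) / σ) with hB
      have h3 : ((A - X) * Q) * σ⁻¹ < (P * (A - B)) * σ⁻¹ :=
        mul_lt_mul_of_pos_right hkey (inv_pos.mpr hσ)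
      have heq : (X * (-1 / σ) - A * (-1 / σ)) * Q - P * (B * (-1 / σ) - A * (-1 / σ))
          = ((A - X) * Q) * σ⁻¹ - (P * (A - B)) * σ⁻¹ := by ring
      rw [heq]
      linarith
    · exact pow_pos (hD μ) 2
end

section
/- Let U_p, U_s, V_p, V_s be real random variables (depending on n) and Σ a positive-definite 2×2 matrix. Suppose (i) P(|U_p − V_p| ≥ C_p n^{1/6}) ≤ C_p'/n^{1/3} and P(|U_s − V_s| ≥ C_s n^{1/6}) ≤ C_s'/n^{1/3}, (ii) sup_{(x_p,x_s)} |P(U_p ≤ x_p n^{1/2}, U_s ≤ x_s n^{1/2}) − Φ_{0,Σ}(x_p, x_s)| ≤ C_u*/n^{1/2}, and (iii) Φ_{0,Σ} has bounded partial derivatives. Then there is a constant C_v* such that sup_{(x_p,x_s)} |P(V_p ≤ x_p n^{1/2}, V_s ≤ x_s n^{1/2}) − Φ_{0,Σ}(x_p, x_s)| ≤ C_v*/n^{1/3}. -/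
open MeasureTheory

/-- CDF of a centered bivariate normal distribution with covariance matrix
`[[s11, s12], [s12, s22]]`, written as a double integral of the density. -/
noncomputable def binormCDF (s11 s12 s22 xp xs : ℝ) : ℝ :=
  ∫ x in Set.Iic xp, ∫ y in Set.Iic xs,
    (1 / (2 * Real.pi * Real.sqrt (s11 * s22 - s12 ^ 2))) *
      Real.exp (-(s22 * x ^ 2 - 2 * s12 * x * y + s11 * y ^ 2) /
        (2 * (s11 * s22 - s12 ^ 2)))

/-- Lemma 4.1-type transfer of a Berry–Esseen bound: if `Vp, Vs` are close to
`Up, Us` with high probability and `(Up, Us)` satisfies a bivariate Berry–Esseen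
bound of order `n^{-1/2}` toward `Φ_{0,Σ}` (which has bounded partial
derivatives, expressed via a Lipschitz bound), then `(Vp, Vs)` satisfies a
Berry–Esseen bound of order `n^{-1/3}`. -/
theorem stmt5 {Ω : Type*} [MeasurableSpace Ω] (P : Measure Ω) [IsProbabilityMeasure P]
    (Up Us Vp Vs : ℕ → Ω → ℝ)
    (s11 s12 s22 : ℝ) (hpos : 0 < s11) (hdet : 0 < s11 * s22 - s12 ^ 2)
    (Cp Cp' Cs Cs' Cu K : ℝ)
    (hCp : 0 < Cp) (hCp' : 0 < Cp') (hCs : 0 < Cs) (hCs' : 0 < Cs') (hCu : 0 < Cu)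
    (hclose_p : ∀ n : ℕ, 1 ≤ n →
      (P {ω | Cp * (n : ℝ) ^ ((1 : ℝ) / 6) ≤ |Up n ω - Vp n ω|}).toReal ≤
        Cp' / (n : ℝ) ^ ((1 : ℝ) / 3))
    (hclose_s : ∀ n : ℕ, 1 ≤ n →
      (P {ω | Cs * (n : ℝ) ^ ((1 : ℝ) / 6) ≤ |Us n ω - Vs n ω|}).toReal ≤
        Cs' / (n : ℝ) ^ ((1 : ℝ) / 3))
    (hBE : ∀ n : ℕ, 1 ≤ n → ∀ xp xs : ℝ,
      |(P {ω | Up n ω ≤ xp * (n : ℝ) ^ ((1 : ℝ) / 2) ∧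
          Us n ω ≤ xs * (n : ℝ) ^ ((1 : ℝ) / 2)}).toReal - binormCDF s11 s12 s22 xp xs| ≤
        Cu / (n : ℝ) ^ ((1 : ℝ) / 2))
    (hLip : 0 < K ∧ LipschitzWith (Real.toNNReal K)
      (fun p : ℝ × ℝ => binormCDF s11 s12 s22 p.1 p.2)) :
    ∃ Cv : ℝ, 0 < Cv ∧ ∀ n : ℕ, 1 ≤ n → ∀ xp xs : ℝ,
      |(P {ω | Vp n ω ≤ xp * (n : ℝ) ^ ((1 : ℝ) / 2) ∧
          Vs n ω ≤ xs * (n : ℝ) ^ ((1 : ℝ) / 2)}).toReal - binormCDF s11 s12 s22 xp xs| ≤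
        Cv / (n : ℝ) ^ ((1 : ℝ) / 3) := by
  obtain ⟨hK, hL⟩ := hLip
  refine ⟨Cp' + Cs' + Cu + K * (Cp + Cs), by positivity, ?_⟩
  intro n hn xp xs
  have hN0 : (0:ℝ) < (n:ℝ) := by exact_mod_cast Nat.lt_of_lt_of_le Nat.zero_lt_one hn
  have hN1 : (1:ℝ) ≤ (n:ℝ) := by exact_mod_cast hn
  have h13pos : 0 < (n:ℝ) ^ ((1:ℝ)/3) := Real.rpow_pos_of_pos hN0 _
  have h16pos : 0 < (n:ℝ) ^ ((1:ℝ)/6) := Real.rpow_pos_of_pos hN0 _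
  have h12pos : 0 < (n:ℝ) ^ ((1:ℝ)/2) := Real.rpow_pos_of_pos hN0 _
  have h12 : (n:ℝ) ^ ((1:ℝ)/2) = (n:ℝ) ^ ((1:ℝ)/3) * (n:ℝ) ^ ((1:ℝ)/6) := by
    rw [← Real.rpow_add hN0]; norm_num
  have hmono : (n:ℝ) ^ ((1:ℝ)/3) ≤ (n:ℝ) ^ ((1:ℝ)/2) :=
    Real.rpow_le_rpow_of_exponent_le hN1 (by norm_num)
  set δp : ℝ := Cp / (n:ℝ) ^ ((1:ℝ)/3) with hδpdef
  set δs : ℝ := Cs / (n:ℝ) ^ ((1:ℝ)/3) with hδsdef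
  have hδp : 0 < δp := div_pos hCp h13pos
  have hδs : 0 < δs := div_pos hCs h13pos
  have hshiftp : ∀ x : ℝ, (x + δp) * (n:ℝ) ^ ((1:ℝ)/2)
      = x * (n:ℝ) ^ ((1:ℝ)/2) + Cp * (n:ℝ) ^ ((1:ℝ)/6) := by
    intro x; rw [hδpdef, h12]; field_simp
  have hshifts : ∀ x : ℝ, (x + δs) * (n:ℝ) ^ ((1:ℝ)/2)
      = x * (n:ℝ) ^ ((1:ℝ)/2) + Cs * (n:ℝ) ^ ((1:ℝ)/6) := by
    intro x; rw [hδsdef, h12]; field_simp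
  have hshiftp' : ∀ x : ℝ, (x - δp) * (n:ℝ) ^ ((1:ℝ)/2)
      = x * (n:ℝ) ^ ((1:ℝ)/2) - Cp * (n:ℝ) ^ ((1:ℝ)/6) := by
    intro x; rw [hδpdef, h12]; field_simp
  have hshifts' : ∀ x : ℝ, (x - δs) * (n:ℝ) ^ ((1:ℝ)/2)
      = x * (n:ℝ) ^ ((1:ℝ)/2) - Cs * (n:ℝ) ^ ((1:ℝ)/6) := by
    intro x; rw [hδsdef, h12]; field_simp
  -- Lipschitz bound on binormCDF
  have hLipb : ∀ a b c d : ℝ,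
      |binormCDF s11 s12 s22 a b - binormCDF s11 s12 s22 c d| ≤ K * (|a - c| + |b - d|) := by
    intro a b c d
    have h := hL.dist_le_mul (a, b) (c, d)
    rw [Prod.dist_eq] at h
    simp only [Real.dist_eq, Real.coe_toNNReal K hK.le] at h
    calc |binormCDF s11 s12 s22 a b - binormCDF s11 s12 s22 c d|
        ≤ K * max |a - c| |b - d| := h
      _ ≤ K * (|a - c| + |b - d|) := by
          apply mul_le_mul_of_nonneg_left _ hK.le
          exact max_le (le_add_of_nonneg_right (abs_nonneg _))
            (le_add_of_nonneg_left (abs_nonneg _))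
  -- subadditivity for toReal with three sets
  have hsub : ∀ A B C D : Set Ω, A ⊆ B ∪ C ∪ D →
      (P A).toReal ≤ (P B).toReal + (P C).toReal + (P D).toReal := by
    intro A B C D h
    have h1 : P A ≤ P B + P C + P D :=
      (measure_mono h).trans ((measure_union_le _ _).trans
        (add_le_add_left (measure_union_le _ _) _))
    have h2 := ENNReal.toReal_mono (by finiteness) h1
    rwa [ENNReal.toReal_add (by finiteness) (by finiteness),
      ENNReal.toReal_add (by finiteness) (by finiteness)] at h2
  set Ep : Set Ω := {ω | Cp * (n : ℝ) ^ ((1 : ℝ) / 6) ≤ |Up n ω - Vp n ω|} with hEp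
  set Es : Set Ω := {ω | Cs * (n : ℝ) ^ ((1 : ℝ) / 6) ≤ |Us n ω - Vs n ω|} with hEs
  -- upper inclusion
  have hincl1 : {ω | Vp n ω ≤ xp * (n:ℝ) ^ ((1:ℝ)/2) ∧ Vs n ω ≤ xs * (n:ℝ) ^ ((1:ℝ)/2)} ⊆
      {ω | Up n ω ≤ (xp + δp) * (n:ℝ) ^ ((1:ℝ)/2) ∧
        Us n ω ≤ (xs + δs) * (n:ℝ) ^ ((1:ℝ)/2)} ∪ Ep ∪ Es := by
    intro ω hω
    by_cases hp : Cp * (n:ℝ) ^ ((1:ℝ)/6) ≤ |Up n ω - Vp n ω|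
    · exact Or.inl (Or.inr hp)
    by_cases hs : Cs * (n:ℝ) ^ ((1:ℝ)/6) ≤ |Us n ω - Vs n ω|
    · exact Or.inr hs
    push_neg at hp hs
    have hp' : Up n ω - Vp n ω < Cp * (n:ℝ) ^ ((1:ℝ)/6) := (le_abs_self _).trans_lt hp
    have hs' : Us n ω - Vs n ω < Cs * (n:ℝ) ^ ((1:ℝ)/6) := (le_abs_self _).trans_lt hs
    refine Or.inl (Or.inl ⟨?_, ?_⟩)
    · rw [hshiftp]; linarith [hω.1]
    · rw [hshifts]; linarith [hω.2]
  -- lower inclusion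
  have hincl2 : {ω | Up n ω ≤ (xp - δp) * (n:ℝ) ^ ((1:ℝ)/2) ∧
        Us n ω ≤ (xs - δs) * (n:ℝ) ^ ((1:ℝ)/2)} ⊆
      {ω | Vp n ω ≤ xp * (n:ℝ) ^ ((1:ℝ)/2) ∧ Vs n ω ≤ xs * (n:ℝ) ^ ((1:ℝ)/2)} ∪ Ep ∪ Es := by
    intro ω hω
    by_cases hp : Cp * (n:ℝ) ^ ((1:ℝ)/6) ≤ |Up n ω - Vp n ω|
    · exact Or.inl (Or.inr hp)
    by_cases hs : Cs * (n:ℝ) ^ ((1:ℝ)/6) ≤ |Us n ω - Vs n ω|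
    · exact Or.inr hs
    push_neg at hp hs
    have hp' : Vp n ω - Up n ω < Cp * (n:ℝ) ^ ((1:ℝ)/6) := by
      rw [abs_sub_comm] at hp; exact (le_abs_self _).trans_lt hp
    have hs' : Vs n ω - Us n ω < Cs * (n:ℝ) ^ ((1:ℝ)/6) := by
      rw [abs_sub_comm] at hs; exact (le_abs_self _).trans_lt hs
    have h1 := hω.1; have h2 := hω.2
    rw [hshiftp'] at h1; rw [hshifts'] at h2
    exact Or.inl (Or.inl ⟨by linarith, by linarith⟩)
  have hep := hclose_p n hn
  have hes := hclose_s n hn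
  have hBE1 := hBE n hn (xp + δp) (xs + δs)
  have hBE2 := hBE n hn (xp - δp) (xs - δs)
  have hCu' : Cu / (n:ℝ) ^ ((1:ℝ)/2) ≤ Cu / (n:ℝ) ^ ((1:ℝ)/3) := by gcongr
  have hLip1 : |binormCDF s11 s12 s22 (xp + δp) (xs + δs) - binormCDF s11 s12 s22 xp xs|
      ≤ K * (δp + δs) := by
    have := hLipb (xp + δp) (xs + δs) xp xs
    rw [show xp + δp - xp = δp by ring, show xs + δs - xs = δs by ring,
      abs_of_pos hδp, abs_of_pos hδs] at this
    exact this
  have hLip2 : |binormCDF s11 s12 s22 (xp - δp) (xs - δs) - binormCDF s11 s12 s22 xp xs|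
      ≤ K * (δp + δs) := by
    have := hLipb (xp - δp) (xs - δs) xp xs
    rw [show xp - δp - xp = -δp by ring, show xs - δs - xs = -δs by ring,
      abs_neg, abs_neg, abs_of_pos hδp, abs_of_pos hδs] at this
    exact this
  have hKd : K * (δp + δs) = K * (Cp + Cs) / (n:ℝ) ^ ((1:ℝ)/3) := by
    rw [hδpdef, hδsdef]; field_simp
  have hU1 := hsub _ _ _ _ hincl1
  have hU2 := hsub _ _ _ _ hincl2
  have hsplit : (Cp' + Cs' + Cu + K * (Cp + Cs)) / (n:ℝ) ^ ((1:ℝ)/3)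
      = Cp' / (n:ℝ) ^ ((1:ℝ)/3) + Cs' / (n:ℝ) ^ ((1:ℝ)/3) + Cu / (n:ℝ) ^ ((1:ℝ)/3)
        + K * (Cp + Cs) / (n:ℝ) ^ ((1:ℝ)/3) := by ring
  rw [abs_le]
  obtain ⟨hBE1a, hBE1b⟩ := abs_le.mp hBE1
  obtain ⟨hBE2a, hBE2b⟩ := abs_le.mp hBE2
  obtain ⟨hLip1a, hLip1b⟩ := abs_le.mp hLip1
  obtain ⟨hLip2a, hLip2b⟩ := abs_le.mp hLip2
  constructor
  · rw [hsplit]; linarith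
  · rw [hsplit]; linarith
end

section
/- Let (X, Y) be bivariate standard normal with correlation ρ ∈ (0,1), and let c > 0. Then P(Y > z | X > c) is strictly increasing in ρ, and as ρ → 1⁻, P(Y > c | X > c) → 1. In particular, for any nominal level z_{1−α} and any β < 1 there exists ρ < 1 such that P(Y > z_{1−α} | X > z_{1−α}) > β. -/
open MeasureTheory ProbabilityTheory Filter

/-- The law of a bivariate standard normal pair with correlation `ρ`, obtained
as the image of two independent standard Gaussians. -/
noncomputable def stdBinorm (ρ : ℝ) : Measure (ℝ × ℝ) :=
  Measure.map (fun p : ℝ × ℝ => (p.1, ρ * p.1 + Real.sqrt (1 - ρ ^ 2) * p.2))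
    ((gaussianReal 0 1).prod (gaussianReal 0 1))

section Aux
open Real Set

noncomputable def gpdf : ℝ → ℝ := gaussianPDFReal 0 1

lemma gpdf_def (x : ℝ) : gpdf x = (Real.sqrt (2 * Real.pi))⁻¹ * Real.exp (- x ^ 2 / 2) := by
  simp [gpdf, gaussianPDFReal]

lemma gpdf_cont : Continuous gpdf := by
  rw [show gpdf = fun x => (Real.sqrt (2 * Real.pi))⁻¹ * Real.exp (- x ^ 2 / 2) from funext gpdf_def]
  fun_prop

lemma gpdf_nonneg (x : ℝ) : 0 ≤ gpdf x := gaussianPDFReal_nonneg 0 1 x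

lemma gpdf_pos (x : ℝ) : 0 < gpdf x := gaussianPDFReal_pos 0 1 x (by norm_num)

lemma gpdf_le_one (x : ℝ) : gpdf x ≤ 1 := by
  rw [gpdf_def]
  have h1 : Real.exp (- x ^ 2 / 2) ≤ 1 := by
    rw [Real.exp_le_one_iff]; nlinarith [sq_nonneg x]
  have h2 : (Real.sqrt (2 * Real.pi))⁻¹ ≤ 1 := by
    rw [inv_le_one_iff₀]
    right
    rw [show (1:ℝ) = Real.sqrt 1 by simp]
    exact Real.sqrt_le_sqrt (by nlinarith [Real.pi_gt_three])
  calc (Real.sqrt (2 * Real.pi))⁻¹ * Real.exp (- x ^ 2 / 2) ≤ 1 * 1 := by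
        exact mul_le_mul h2 h1 (by positivity) (by norm_num)
    _ = 1 := by norm_num

lemma gpdf_integrable : Integrable gpdf := integrable_gaussianPDFReal 0 1

noncomputable def Fbar (t : ℝ) : ℝ := ((gaussianReal 0 1) (Set.Ioi t)).toReal

lemma Fbar_eq_integral (t : ℝ) : Fbar t = ∫ x in Set.Ioi t, gpdf x := by
  rw [Fbar, gaussianReal_apply_eq_integral 0 (by norm_num) (Set.Ioi t),
    ENNReal.toReal_ofReal]
  · rfl
  · exact setIntegral_nonneg measurableSet_Ioi fun x _ => gpdf_nonneg x

lemma Fbar_nonneg (t : ℝ) : 0 ≤ Fbar t := ENNReal.toReal_nonneg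

lemma Fbar_le_one (t : ℝ) : Fbar t ≤ 1 := by
  have := prob_le_one (μ := gaussianReal 0 1) (s := Set.Ioi t)
  rw [Fbar]
  exact ENNReal.toReal_le_of_le_ofReal one_pos.le (by simpa using this)

lemma Fbar_pos (t : ℝ) : 0 < Fbar t := by
  rw [Fbar_eq_integral]
  rw [setIntegral_pos_iff_support_of_nonneg_ae
    (ae_of_all _ fun x => gpdf_nonneg x) gpdf_integrable.integrableOn]
  have : Function.support gpdf = Set.univ := by
    ext x; simp [Function.mem_support, (gpdf_pos x).ne']
  rw [this, Set.univ_inter]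
  simp

lemma Fbar_ofReal (t : ℝ) : (gaussianReal 0 1) (Set.Ioi t) = ENNReal.ofReal (Fbar t) := by
  rw [Fbar, ENNReal.ofReal_toReal (measure_ne_top _ _)]

lemma Fbar_tendsto_atBot : Tendsto Fbar atBot (nhds 1) := by
  have h : Fbar = fun t => 1 - cdf (gaussianReal 0 1) t := by
    funext t
    rw [cdf_eq_real, measureReal_def, Fbar]
    have hc : (gaussianReal 0 1) (Set.Ioi t) = 1 - (gaussianReal 0 1) (Set.Iic t) := by
      rw [← MeasureTheory.prob_compl_eq_one_sub measurableSet_Iic, Set.compl_Iic]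
    rw [hc, ENNReal.toReal_sub_of_le (prob_le_one) (by norm_num)]
    norm_num
  rw [h]
  have := (tendsto_cdf_atBot (μ := gaussianReal 0 1)).const_sub 1
  simpa using this

lemma gpdf_eq : gpdf = gaussianPDFReal 0 1 := rfl

lemma Fbar_split {a b : ℝ} (hab : a ≤ b) :
    Fbar a = (∫ x in Set.Ioc a b, gpdf x) + Fbar b := by
  rw [Fbar_eq_integral, Fbar_eq_integral, ← Set.Ioc_union_Ioi_eq_Ioi hab,
    setIntegral_union (Set.Ioc_disjoint_Ioi le_rfl) measurableSet_Ioi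
      gpdf_integrable.integrableOn gpdf_integrable.integrableOn]

lemma Fbar_eq_sub (t : ℝ) : Fbar t = Fbar 0 - ∫ u in (0:ℝ)..t, gpdf u := by
  rcases le_total 0 t with h | h
  · rw [intervalIntegral.integral_of_le h, Fbar_split h]
    rw [MeasureTheory.integral_Ioc_eq_integral_Ioo]
    rw [← MeasureTheory.integral_Ioc_eq_integral_Ioo]
    ring
  · rw [intervalIntegral.integral_of_ge h, Fbar_split h]
    rw [MeasureTheory.integral_Ioc_eq_integral_Ioo, ← MeasureTheory.integral_Ioc_eq_integral_Ioo]
    ring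

lemma Fbar_hasDerivAt (t : ℝ) : HasDerivAt Fbar (-(gpdf t)) t := by
  have h1 : HasDerivAt (fun u => ∫ x in (0:ℝ)..u, gpdf x) (gpdf t) t := by
    exact intervalIntegral.integral_hasDerivAt_right
      (gpdf_integrable.intervalIntegrable)
      gpdf_cont.stronglyMeasurable.stronglyMeasurableAtFilter
      gpdf_cont.continuousAt
  have h2 := (h1.const_sub (Fbar 0))
  have : Fbar = fun t => Fbar 0 - ∫ u in (0:ℝ)..t, gpdf u := funext Fbar_eq_sub
  rw [this]
  exact h2

lemma Fbar_continuous : Continuous Fbar :=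
  continuous_iff_continuousAt.2 fun t => (Fbar_hasDerivAt t).continuousAt


/-- the generic integrand -/
noncomputable def Jf (z ρ x : ℝ) : ℝ := Fbar ((z - ρ * x) / Real.sqrt (1 - ρ ^ 2)) * gpdf x

lemma Jf_contx (z ρ : ℝ) : Continuous (fun x => Jf z ρ x) := by
  unfold Jf
  exact ((Fbar_continuous.comp ((continuous_const.sub (continuous_const.mul continuous_id)).div_const
    _)).mul gpdf_cont)

lemma Jf_nonneg (z ρ x : ℝ) : 0 ≤ Jf z ρ x := mul_nonneg (Fbar_nonneg _) (gpdf_nonneg _)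

lemma Jf_integrable (z ρ c : ℝ) : IntegrableOn (fun x => Jf z ρ x) (Set.Ioi c) := by
  refine Integrable.mono gpdf_integrable.integrableOn
    ((Jf_contx z ρ).aestronglyMeasurable.restrict) (ae_of_all _ fun x => ?_)
  rw [Real.norm_eq_abs, Real.norm_eq_abs, Jf, abs_mul,
    abs_of_nonneg (gpdf_nonneg x), abs_of_nonneg (Fbar_nonneg _)]
  nlinarith [Fbar_le_one ((z - ρ * x) / Real.sqrt (1 - ρ ^ 2)), gpdf_nonneg x,
    Fbar_nonneg ((z - ρ * x) / Real.sqrt (1 - ρ ^ 2))]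

lemma key_formula (ρ : ℝ) (hs : 0 < Real.sqrt (1 - ρ ^ 2)) (c z : ℝ) :
    (((stdBinorm ρ)[|{p : ℝ × ℝ | c < p.1}]) {p : ℝ × ℝ | z < p.2}).toReal
      = (∫ x in Set.Ioi c, Jf z ρ x) / Fbar c := by
  set s := Real.sqrt (1 - ρ ^ 2) with hsdef
  have hT : Measurable (fun p : ℝ × ℝ => (p.1, ρ * p.1 + s * p.2)) :=
    measurable_fst.prodMk ((measurable_fst.const_mul ρ).add (measurable_snd.const_mul s))
  have hS : MeasurableSet {p : ℝ × ℝ | c < p.1} := measurableSet_lt measurable_const measurable_fst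
  have hB : MeasurableSet {p : ℝ × ℝ | z < p.2} := measurableSet_lt measurable_const measurable_snd
  have hμ : gaussianReal 0 1 = volume.withDensity (gaussianPDF 0 1) :=
    gaussianReal_of_var_ne_zero 0 (by norm_num)
  -- denominator
  have hden : stdBinorm ρ {p : ℝ × ℝ | c < p.1} = ENNReal.ofReal (Fbar c) := by
    rw [stdBinorm, Measure.map_apply hT hS]
    have hpre : (fun p : ℝ × ℝ => (p.1, ρ * p.1 + s * p.2)) ⁻¹' {p : ℝ × ℝ | c < p.1}
        = (Set.Ioi c) ×ˢ (Set.univ : Set ℝ) := by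
      ext p; simp [Set.mem_prod]
    rw [hpre, Measure.prod_prod, measure_univ, mul_one, Fbar_ofReal]
  -- numerator
  have hnum : stdBinorm ρ ({p : ℝ × ℝ | c < p.1} ∩ {p : ℝ × ℝ | z < p.2})
      = ENNReal.ofReal (∫ x in Set.Ioi c, Jf z ρ x) := by
    rw [stdBinorm, Measure.map_apply hT (hS.inter hB)]
    have hpre : (fun p : ℝ × ℝ => (p.1, ρ * p.1 + s * p.2)) ⁻¹'
        ({p : ℝ × ℝ | c < p.1} ∩ {p : ℝ × ℝ | z < p.2})
        = {p : ℝ × ℝ | c < p.1 ∧ z < ρ * p.1 + s * p.2} := by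
      ext p; simp [Set.mem_inter_iff]
    rw [hpre]
    have hAm : MeasurableSet {p : ℝ × ℝ | c < p.1 ∧ z < ρ * p.1 + s * p.2} := by
      have h1 : {p : ℝ × ℝ | c < p.1 ∧ z < ρ * p.1 + s * p.2}
          = {p : ℝ × ℝ | c < p.1} ∩ {p : ℝ × ℝ | z < ρ * p.1 + s * p.2} := rfl
      rw [h1]
      exact hS.inter (measurableSet_lt measurable_const
        ((measurable_fst.const_mul ρ).add (measurable_snd.const_mul s)))
    rw [Measure.prod_apply hAm]
    have hslice : ∀ x : ℝ, (gaussianReal 0 1)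
        (Prod.mk x ⁻¹' {p : ℝ × ℝ | c < p.1 ∧ z < ρ * p.1 + s * p.2})
        = Set.indicator (Set.Ioi c) (fun x => ENNReal.ofReal (Fbar ((z - ρ * x) / s))) x := by
      intro x
      by_cases hx : c < x
      · have : Prod.mk x ⁻¹' {p : ℝ × ℝ | c < p.1 ∧ z < ρ * p.1 + s * p.2}
            = Set.Ioi ((z - ρ * x) / s) := by
          ext y
          simp only [Set.mem_preimage, Set.mem_setOf_eq, Set.mem_Ioi, hx, true_and]
          rw [div_lt_iff₀ hs]
          constructor <;> intro h <;> nlinarith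
        rw [this, Fbar_ofReal, Set.indicator_of_mem (Set.mem_Ioi.2 hx)]
      · have : Prod.mk x ⁻¹' {p : ℝ × ℝ | c < p.1 ∧ z < ρ * p.1 + s * p.2} = (∅ : Set ℝ) := by
          ext y; simp [hx]
        rw [this, measure_empty, Set.indicator_of_notMem (by simpa using hx)]
    rw [lintegral_congr hslice, lintegral_indicator measurableSet_Ioi]
    have hmeasF : Measurable fun x => ENNReal.ofReal (Fbar ((z - ρ * x) / s)) := by
      exact ENNReal.measurable_ofReal.comp
        ((Fbar_continuous.comp ((continuous_const.sub (continuous_const.mul continuous_id)).div_const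
          _)).measurable)
    rw [hμ, MeasureTheory.restrict_withDensity measurableSet_Ioi,
      lintegral_withDensity_eq_lintegral_mul _ (measurable_gaussianPDF 0 1) hmeasF]
    have heq : ∀ x : ℝ, (gaussianPDF 0 1 * fun x => ENNReal.ofReal (Fbar ((z - ρ * x) / s))) x
        = ENNReal.ofReal (Jf z ρ x) := by
      intro x
      simp only [Pi.mul_apply, gaussianPDF, ← gpdf_eq]
      rw [← ENNReal.ofReal_mul (gpdf_nonneg x), Jf, mul_comm]
    rw [lintegral_congr heq,
      ← MeasureTheory.ofReal_integral_eq_lintegral_ofReal (Jf_integrable z ρ c)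
        (ae_of_all _ fun x => Jf_nonneg z ρ x)]
  rw [cond_apply hS, hden, hnum, ENNReal.toReal_mul, ENNReal.toReal_inv,
    ENNReal.toReal_ofReal (Fbar_nonneg c),
    ENNReal.toReal_ofReal (setIntegral_nonneg measurableSet_Ioi fun x _ => Jf_nonneg z ρ x),
    inv_mul_eq_div]


noncomputable def Df (z ρ x : ℝ) : ℝ :=
  gpdf ((z - ρ * x) / Real.sqrt (1 - ρ ^ 2)) * ((x - ρ * z) / (Real.sqrt (1 - ρ ^ 2)) ^ 3)
    * gpdf x

lemma Df_cont (z ρ : ℝ) : Continuous (fun x => Df z ρ x) := by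
  unfold Df
  exact ((gpdf_cont.comp ((continuous_const.sub (continuous_const.mul continuous_id)).div_const
    _)).mul ((continuous_id.sub continuous_const).div_const _)).mul gpdf_cont

lemma Jf_hasDerivAt (z x : ℝ) {ρ : ℝ} (hρ : ρ ∈ Set.Ioo (-1:ℝ) 1) :
    HasDerivAt (fun t => Jf z t x) (Df z ρ x) ρ := by
  obtain ⟨hρ1, hρ2⟩ := hρ
  have h1ρ : (0:ℝ) < 1 - ρ ^ 2 := by nlinarith
  set s := Real.sqrt (1 - ρ ^ 2) with hsdef
  have hs : 0 < s := Real.sqrt_pos.2 h1ρ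
  have hssq : s ^ 2 = 1 - ρ ^ 2 := Real.sq_sqrt h1ρ.le
  have hn : HasDerivAt (fun t : ℝ => z - t * x) (-x) ρ := by
    simpa using ((hasDerivAt_id ρ).mul_const x).const_sub z
  have hq : HasDerivAt (fun t : ℝ => 1 - t ^ 2) (-(2 * ρ)) ρ := by
    simpa using (hasDerivAt_pow 2 ρ).const_sub 1
  have hd : HasDerivAt (fun t : ℝ => Real.sqrt (1 - t ^ 2)) (-ρ / s) ρ := by
    have h := (Real.hasDerivAt_sqrt (x := 1 - ρ ^ 2) h1ρ.ne').comp ρ hq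
    refine h.congr_deriv (Eq.symm ?_)
    field_simp
    ring
  have hu : HasDerivAt (fun t : ℝ => (z - t * x) / Real.sqrt (1 - t ^ 2))
      ((ρ * z - x) / s ^ 3) ρ := by
    have h := hn.div hd hs.ne'
    refine h.congr_deriv (Eq.symm ?_)
    rw [div_eq_div_iff (by positivity) (by positivity)]
    field_simp
    rw [← hsdef]
    linear_combination (x * s ^ 2) * hssq
  have hF := (Fbar_hasDerivAt ((z - ρ * x) / s)).comp ρ hu
  have h := hF.mul_const (gpdf x)
  refine h.congr_deriv (Eq.symm ?_)
  unfold Df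
  ring

noncomputable def bnd (b z x : ℝ) : ℝ :=
  (Real.sqrt (1 - b ^ 2))⁻¹ ^ 3 * (Real.exp (-4⁻¹ * x ^ 2) + |z| * gpdf x)

lemma abs_mul_gpdf_le (x : ℝ) : |x| * gpdf x ≤ Real.exp (-4⁻¹ * x ^ 2) := by
  have h1 : gpdf x ≤ Real.exp (- x ^ 2 / 2) := by
    rw [gpdf_def]
    have h2 : (Real.sqrt (2 * Real.pi))⁻¹ ≤ 1 := by
      rw [inv_le_one_iff₀]
      right
      rw [show (1:ℝ) = Real.sqrt 1 by simp]
      exact Real.sqrt_le_sqrt (by nlinarith [Real.pi_gt_three])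
    nlinarith [Real.exp_pos (- x ^ 2 / 2)]
  have h2 : |x| ≤ Real.exp (4⁻¹ * x ^ 2) := by
    have h3 : |x| ≤ 1 + 4⁻¹ * x ^ 2 := by
      nlinarith [sq_abs x, sq_nonneg (|x| - 2)]
    calc |x| ≤ 1 + 4⁻¹ * x ^ 2 := h3
      _ ≤ Real.exp (4⁻¹ * x ^ 2) := by
          have := Real.add_one_le_exp (4⁻¹ * x ^ 2); linarith
  calc |x| * gpdf x ≤ Real.exp (4⁻¹ * x ^ 2) * Real.exp (- x ^ 2 / 2) := by
        exact mul_le_mul h2 h1 (gpdf_nonneg x) (Real.exp_nonneg _)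
    _ = Real.exp (-4⁻¹ * x ^ 2) := by rw [← Real.exp_add]; ring_nf

lemma Df_bound {b ρ : ℝ} (hb1 : b < 1) (hρb : |ρ| ≤ b) (z x : ℝ) :
    |Df z ρ x| ≤ bnd b z x := by
  have hb0 : 0 ≤ b := le_trans (abs_nonneg ρ) hρb
  have hb2 : (0:ℝ) < 1 - b ^ 2 := by nlinarith
  have hρ2 : ρ ^ 2 ≤ b ^ 2 := by nlinarith [sq_abs ρ, abs_nonneg ρ]
  set sb := Real.sqrt (1 - b ^ 2) with hsb
  set s := Real.sqrt (1 - ρ ^ 2) with hs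
  have hsb0 : 0 < sb := Real.sqrt_pos.2 hb2
  have hs0 : 0 < s := Real.sqrt_pos.2 (by nlinarith)
  have hsbs : sb ≤ s := Real.sqrt_le_sqrt (by nlinarith)
  have hsb3 : sb ^ 3 ≤ s ^ 3 := pow_le_pow_left₀ hsb0.le hsbs 3
  have habs : |x - ρ * z| ≤ |x| + |z| := by
    calc |x - ρ * z| ≤ |x| + |ρ * z| := abs_sub _ _
      _ ≤ |x| + |z| := by
          rw [abs_mul]
          nlinarith [abs_nonneg z, abs_nonneg ρ]
  have key : |Df z ρ x| ≤ (|x| + |z|) / sb ^ 3 * gpdf x := by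
    rw [Df, abs_mul, abs_mul, abs_of_nonneg (gpdf_nonneg x),
      abs_of_nonneg (gpdf_nonneg _), abs_div, abs_of_nonneg (by positivity : (0:ℝ) ≤ s ^ 3)]
    have h1 : |x - ρ * z| / s ^ 3 ≤ (|x| + |z|) / sb ^ 3 :=
      div_le_div₀ (by positivity) habs (by positivity) hsb3
    calc gpdf ((z - ρ * x) / s) * (|x - ρ * z| / s ^ 3) * gpdf x
        ≤ 1 * ((|x| + |z|) / sb ^ 3) * gpdf x := by
          apply mul_le_mul_of_nonneg_right _ (gpdf_nonneg x)
          exact mul_le_mul (gpdf_le_one _) h1 (by positivity) (by norm_num)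
      _ = (|x| + |z|) / sb ^ 3 * gpdf x := by ring
  calc |Df z ρ x| ≤ (|x| + |z|) / sb ^ 3 * gpdf x := key
    _ = sb⁻¹ ^ 3 * (|x| * gpdf x + |z| * gpdf x) := by field_simp
    _ ≤ sb⁻¹ ^ 3 * (Real.exp (-4⁻¹ * x ^ 2) + |z| * gpdf x) := by
        have := abs_mul_gpdf_le x
        have h : (0:ℝ) ≤ sb⁻¹ ^ 3 := by positivity
        nlinarith
    _ = bnd b z x := rfl

lemma bnd_integrable (b z c : ℝ) : IntegrableOn (fun x => bnd b z x) (Set.Ioi c) := by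
  unfold bnd
  apply Integrable.const_mul
  apply Integrable.add
  · exact (integrable_exp_neg_mul_sq (by norm_num : (0:ℝ) < 4⁻¹)).integrableOn
  · exact (gpdf_integrable.const_mul |z|).integrableOn

lemma J_hasDerivAt (c z : ℝ) {ρ₀ : ℝ} (hρ : ρ₀ ∈ Set.Ioo (0:ℝ) 1) :
    HasDerivAt (fun ρ => ∫ x in Set.Ioi c, Jf z ρ x) (∫ x in Set.Ioi c, Df z ρ₀ x) ρ₀ := by
  obtain ⟨hρ1, hρ2⟩ := hρ
  set ε := min ρ₀ (1 - ρ₀) / 2 with hε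
  have hε0 : 0 < ε := div_pos (lt_min hρ1 (by linarith)) two_pos
  set b := (1 + ρ₀) / 2 with hb
  have hb1 : b < 1 := by rw [hb]; linarith
  have hball : ∀ ρ ∈ Metric.ball ρ₀ ε, |ρ| ≤ b ∧ ρ ∈ Set.Ioo (-1:ℝ) 1 := by
    intro ρ hρ
    rw [Metric.mem_ball, Real.dist_eq, abs_lt] at hρ
    have h1 : ε ≤ ρ₀ / 2 := by
      rw [hε]; have := min_le_left ρ₀ (1 - ρ₀); linarith
    have h2 : ε ≤ (1 - ρ₀) / 2 := by
      rw [hε]; have := min_le_right ρ₀ (1 - ρ₀); linarith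
    constructor
    · rw [abs_le]; constructor <;> [linarith; linarith]
    · constructor <;> [linarith; linarith]
  have hres := hasDerivAt_integral_of_dominated_loc_of_deriv_le (μ := volume.restrict (Set.Ioi c))
    (F := fun ρ x => Jf z ρ x) (F' := fun ρ x => Df z ρ x)
    (x₀ := ρ₀) (bound := fun x => bnd b z x) (Metric.ball_mem_nhds ρ₀ hε0)
    ?_ (Jf_integrable z ρ₀ c) ?_ ?_ ?_ ?_
  · exact hres.2
  · filter_upwards with ρ
    exact (((Fbar_continuous.comp ((continuous_const.sub
      (continuous_const.mul continuous_id)).div_const _)).mul gpdf_cont)).aestronglyMeasurable.restrict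
  · exact (Df_cont z ρ₀).aestronglyMeasurable.restrict
  · filter_upwards with x
    intro ρ hρmem
    exact Df_bound hb1 (hball ρ hρmem).1 z x
  · exact bnd_integrable b z c
  · filter_upwards with x
    intro ρ hρmem
    exact Jf_hasDerivAt z x (hball ρ hρmem).2



lemma Df_integrable (z c : ℝ) {ρ : ℝ} (hρ : ρ ∈ Set.Ioo (0:ℝ) 1) :
    IntegrableOn (fun x => Df z ρ x) (Set.Ioi c) := by
  refine Integrable.mono (bnd_integrable ρ z c) ((Df_cont z ρ).aestronglyMeasurable.restrict)
    (ae_of_all _ fun x => ?_)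
  rw [Real.norm_eq_abs, Real.norm_eq_abs]
  have h := Df_bound hρ.2 (le_of_eq (abs_of_pos hρ.1)) z x
  exact h.trans (le_abs_self _)

/-- The antiderivative of `Df z ρ`. -/
noncomputable def Kf (z ρ x : ℝ) : ℝ :=
  -((2 * Real.pi)⁻¹ * (Real.sqrt (1 - ρ ^ 2))⁻¹
    * Real.exp (-(x ^ 2 - 2 * ρ * x * z + z ^ 2) / (2 * (1 - ρ ^ 2))))

lemma Kf_hasDerivAt (z x : ℝ) {ρ : ℝ} (hρ : ρ ∈ Set.Ioo (0:ℝ) 1) :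
    HasDerivAt (fun x => Kf z ρ x) (Df z ρ x) x := by
  obtain ⟨hρ1, hρ2⟩ := hρ
  have h1ρ : (0:ℝ) < 1 - ρ ^ 2 := by nlinarith
  set s := Real.sqrt (1 - ρ ^ 2) with hsdef
  have hs : 0 < s := Real.sqrt_pos.2 h1ρ
  have hssq : s ^ 2 = 1 - ρ ^ 2 := Real.sq_sqrt h1ρ.le
  have hsπ : Real.sqrt (2 * Real.pi) ^ 2 = 2 * Real.pi :=
    Real.sq_sqrt (by positivity)
  -- derivative of the exponent
  have he : HasDerivAt (fun x : ℝ => -(x ^ 2 - 2 * ρ * x * z + z ^ 2) / (2 * (1 - ρ ^ 2)))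
      ((ρ * z - x) / (1 - ρ ^ 2)) x := by
    have h1 : HasDerivAt (fun x : ℝ => x ^ 2 - 2 * ρ * x * z + z ^ 2) (2 * x - 2 * ρ * z) x := by
      have := ((hasDerivAt_pow 2 x).sub (((hasDerivAt_id x).const_mul (2 * ρ)).mul_const z)).add_const (z ^ 2)
      refine this.congr_deriv (Eq.symm ?_)
      ring
    have h2 := (h1.neg.div_const (2 * (1 - ρ ^ 2)))
    refine h2.congr_deriv (Eq.symm ?_)
    field_simp
    ring
  have hexp := (Real.hasDerivAt_exp _).comp x he
  have h' : HasDerivAt (fun x => Kf z ρ x)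
      (-((2 * Real.pi)⁻¹ * s⁻¹ *
        (Real.exp (-(x ^ 2 - 2 * ρ * x * z + z ^ 2) / (2 * (1 - ρ ^ 2)))
          * ((ρ * z - x) / (1 - ρ ^ 2))))) x := by
    unfold Kf
    exact (hexp.const_mul ((2 * Real.pi)⁻¹ * s⁻¹)).neg
  -- identify with Df
  have hDf : Df z ρ x = -((2 * Real.pi)⁻¹ * s⁻¹ *
      (Real.exp (-(x ^ 2 - 2 * ρ * x * z + z ^ 2) / (2 * (1 - ρ ^ 2)))
        * ((ρ * z - x) / (1 - ρ ^ 2)))) := by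
    rw [Df, gpdf_def, gpdf_def]
    have hu2 : ((z - ρ * x) / s) ^ 2 = (z - ρ * x) ^ 2 / (1 - ρ ^ 2) := by
      rw [div_pow, hssq]
    rw [hu2]
    have hexps : Real.exp (- ((z - ρ * x) ^ 2 / (1 - ρ ^ 2)) / 2) * Real.exp (- x ^ 2 / 2)
        = Real.exp (-(x ^ 2 - 2 * ρ * x * z + z ^ 2) / (2 * (1 - ρ ^ 2))) := by
      rw [← Real.exp_add]
      congr 1
      field_simp
      ring
    rw [show ((Real.sqrt (2 * Real.pi))⁻¹ * Real.exp (-((z - ρ * x) ^ 2 / (1 - ρ ^ 2)) / 2) *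
        ((x - ρ * z) / s ^ 3) * ((Real.sqrt (2 * Real.pi))⁻¹ * Real.exp (- x ^ 2 / 2)))
        = ((Real.sqrt (2 * Real.pi))⁻¹ * (Real.sqrt (2 * Real.pi))⁻¹) *
          (Real.exp (-((z - ρ * x) ^ 2 / (1 - ρ ^ 2)) / 2) * Real.exp (- x ^ 2 / 2)) *
          ((x - ρ * z) / s ^ 3) by ring, hexps]
    have hconst : (Real.sqrt (2 * Real.pi))⁻¹ * (Real.sqrt (2 * Real.pi))⁻¹ = (2 * Real.pi)⁻¹ := by
      rw [← mul_inv, Real.mul_self_sqrt (by positivity : (0:ℝ) ≤ 2 * Real.pi)]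
    rw [hconst]
    have hcoef : (x - ρ * z) / s ^ 3 = s⁻¹ * (-((ρ * z - x) / (1 - ρ ^ 2))) := by
      rw [← hssq]
      field_simp
      try ring
      try tauto
    rw [hcoef]
    ring
  rw [hDf]
  exact h'

lemma Kf_tendsto (z : ℝ) {ρ : ℝ} (hρ : ρ ∈ Set.Ioo (0:ℝ) 1) :
    Tendsto (fun x => Kf z ρ x) atTop (nhds 0) := by
  obtain ⟨hρ1, hρ2⟩ := hρ
  have h1ρ : (0:ℝ) < 1 - ρ ^ 2 := by nlinarith
  have hq : Tendsto (fun x : ℝ => x ^ 2 - 2 * ρ * x * z + z ^ 2) atTop atTop := by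
    have h1 : Tendsto (fun x : ℝ => x * (x - 2 * ρ * z) + z ^ 2) atTop atTop := by
      apply tendsto_atTop_add_const_right
      exact Tendsto.atTop_mul_atTop₀ tendsto_id (tendsto_atTop_add_const_right _ _ tendsto_id)
    convert h1 using 2 with x
    ring
  have hqe : Tendsto (fun x : ℝ => -(x ^ 2 - 2 * ρ * x * z + z ^ 2) / (2 * (1 - ρ ^ 2)))
      atTop atBot := by
    have := hq.const_mul_atTop (show (0:ℝ) < (2 * (1 - ρ ^ 2))⁻¹ by positivity)
    apply Tendsto.comp tendsto_neg_atTop_atBot at this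
    convert this using 2 with x
    simp only [Function.comp_apply]
    field_simp
  have hexp := Real.tendsto_exp_atBot.comp hqe
  have := (hexp.const_mul ((2 * Real.pi)⁻¹ * (Real.sqrt (1 - ρ ^ 2))⁻¹)).neg
  simpa [Kf, Function.comp_def, mul_assoc] using this

lemma Df_integral_pos (z c : ℝ) {ρ : ℝ} (hρ : ρ ∈ Set.Ioo (0:ℝ) 1) :
    0 < ∫ x in Set.Ioi c, Df z ρ x := by
  have h1ρ : (0:ℝ) < 1 - ρ ^ 2 := by nlinarith [hρ.1, hρ.2]
  have hval : ∫ x in Set.Ioi c, Df z ρ x = 0 - Kf z ρ c := by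
    apply integral_Ioi_of_hasDerivAt_of_tendsto
    · exact (Kf_hasDerivAt z c hρ).continuousAt.continuousWithinAt
    · exact fun x _ => Kf_hasDerivAt z x hρ
    · exact Df_integrable z c hρ
    · exact Kf_tendsto z hρ
  rw [hval, Kf]
  have : 0 < (2 * Real.pi)⁻¹ * (Real.sqrt (1 - ρ ^ 2))⁻¹
      * Real.exp (-(c ^ 2 - 2 * ρ * c * z + z ^ 2) / (2 * (1 - ρ ^ 2))) := by
    have := Real.sqrt_pos.2 h1ρ
    positivity
  linarith




lemma Jf_abs_le (z ρ x : ℝ) : ‖Jf z ρ x‖ ≤ gpdf x := by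
  rw [Real.norm_eq_abs, Jf, abs_mul, abs_of_nonneg (gpdf_nonneg x),
    abs_of_nonneg (Fbar_nonneg _)]
  nlinarith [Fbar_le_one ((z - ρ * x) / Real.sqrt (1 - ρ ^ 2)), gpdf_nonneg x,
    Fbar_nonneg ((z - ρ * x) / Real.sqrt (1 - ρ ^ 2))]

lemma sqrt_tendsto_zero :
    Tendsto (fun ρ : ℝ => Real.sqrt (1 - ρ ^ 2)) (nhdsWithin 1 (Set.Iio 1))
      (nhdsWithin 0 (Set.Ioi 0)) := by
  rw [tendsto_nhdsWithin_iff]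
  constructor
  · have hcont : Continuous (fun ρ : ℝ => Real.sqrt (1 - ρ ^ 2)) := by fun_prop
    have := hcont.tendsto 1
    simp only [one_pow, sub_self, Real.sqrt_zero] at this
    exact this.mono_left nhdsWithin_le_nhds
  · filter_upwards [Ioo_mem_nhdsLT_of_mem (by norm_num : (1:ℝ) ∈ Set.Ioc 0 1)] with ρ hρ
    have : (0:ℝ) < 1 - ρ ^ 2 := by nlinarith [hρ.1, hρ.2]
    exact Real.sqrt_pos.2 this

lemma J_tendsto_one (c : ℝ) :
    Tendsto (fun ρ => ∫ x in Set.Ioi c, Jf c ρ x) (nhdsWithin 1 (Set.Iio 1))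
      (nhds (Fbar c)) := by
  rw [Fbar_eq_integral]
  apply tendsto_integral_filter_of_dominated_convergence (bound := gpdf)
  · filter_upwards with ρ
    exact (Jf_contx c ρ).aestronglyMeasurable.restrict
  · filter_upwards with ρ
    exact ae_of_all _ fun x => Jf_abs_le c ρ x
  · exact gpdf_integrable.integrableOn
  · filter_upwards [ae_restrict_mem measurableSet_Ioi] with x hx
    have hx' : c - x < 0 := by simp only [Set.mem_Ioi] at hx; linarith
    have hnum : Tendsto (fun ρ : ℝ => c - ρ * x) (nhdsWithin 1 (Set.Iio 1)) (nhds (c - x)) := by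
      have hcont : Continuous (fun ρ : ℝ => c - ρ * x) := by fun_prop
      have := hcont.tendsto 1
      simp only [one_mul] at this
      exact this.mono_left nhdsWithin_le_nhds
    have hinv : Tendsto (fun ρ : ℝ => (Real.sqrt (1 - ρ ^ 2))⁻¹)
        (nhdsWithin 1 (Set.Iio 1)) atTop := sqrt_tendsto_zero.inv_tendsto_nhdsGT_zero
    have hdiv : Tendsto (fun ρ : ℝ => (c - ρ * x) / Real.sqrt (1 - ρ ^ 2))
        (nhdsWithin 1 (Set.Iio 1)) atBot := by
      have := hnum.neg_mul_atTop hx' hinv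
      simpa [div_eq_mul_inv] using this
    have := (Fbar_tendsto_atBot.comp hdiv).mul_const (gpdf x)
    simpa [Jf, Function.comp_def] using this

lemma cond_tendsto (c : ℝ) :
    Tendsto (fun ρ => (((stdBinorm ρ)[|{p : ℝ × ℝ | c < p.1}]) {p : ℝ × ℝ | c < p.2}).toReal)
      (nhdsWithin 1 (Set.Iio 1)) (nhds 1) := by
  have h1 := (J_tendsto_one c).div_const (Fbar c)
  rw [div_self (Fbar_pos c).ne'] at h1
  apply Tendsto.congr' _ h1
  filter_upwards [Ioo_mem_nhdsLT_of_mem (by norm_num : (1:ℝ) ∈ Set.Ioc 0 1)] with ρ hρ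
  have hs : 0 < Real.sqrt (1 - ρ ^ 2) := Real.sqrt_pos.2 (by nlinarith [hρ.1, hρ.2])
  exact (key_formula ρ hs c c).symm

/-- For a bivariate standard normal pair `(X, Y)` with correlation `ρ ∈ (0,1)`
and `c > 0`, `P(Y > z | X > c)` is strictly increasing in `ρ`; as `ρ → 1⁻`,
`P(Y > c | X > c) → 1`; and for any threshold `z₁₋α` and `β < 1` there is
`ρ < 1` with `P(Y > z₁₋α | X > z₁₋α) > β`. -/
theorem stmt9 (c z : ℝ) (hc : 0 < c) :
    StrictMonoOn
        (fun ρ => (((stdBinorm ρ)[|{p : ℝ × ℝ | c < p.1}]) {p : ℝ × ℝ | z < p.2}).toReal)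
        (Set.Ioo (0 : ℝ) 1) ∧
      Tendsto
        (fun ρ => (((stdBinorm ρ)[|{p : ℝ × ℝ | c < p.1}]) {p : ℝ × ℝ | c < p.2}).toReal)
        (nhdsWithin 1 (Set.Iio 1)) (nhds 1) ∧
      (∀ z' β : ℝ, β < 1 → ∃ ρ ∈ Set.Ioo (0 : ℝ) 1,
        β < (((stdBinorm ρ)[|{p : ℝ × ℝ | z' < p.1}]) {p : ℝ × ℝ | z' < p.2}).toReal) := by
  refine ⟨?_, cond_tendsto c, ?_⟩
  · have hmono : StrictMonoOn (fun ρ => (∫ x in Set.Ioi c, Jf z ρ x) / Fbar c)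
        (Set.Ioo (0:ℝ) 1) := by
      apply strictMonoOn_of_deriv_pos (convex_Ioo 0 1)
      · intro ρ hρ
        exact ((J_hasDerivAt c z hρ).div_const (Fbar c)).continuousAt.continuousWithinAt
      · intro ρ hρ
        rw [interior_Ioo] at hρ
        rw [((J_hasDerivAt c z hρ).div_const (Fbar c)).deriv]
        exact div_pos (Df_integral_pos z c hρ) (Fbar_pos c)
    intro a ha b hb hab
    have hsa : 0 < Real.sqrt (1 - a ^ 2) := Real.sqrt_pos.2 (by nlinarith [ha.1, ha.2])
    have hsb : 0 < Real.sqrt (1 - b ^ 2) := Real.sqrt_pos.2 (by nlinarith [hb.1, hb.2])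
    simp only
    rw [key_formula a hsa c z, key_formula b hsb c z]
    exact hmono ha hb hab
  · intro z' β hβ
    have h := cond_tendsto z'
    have h2 : ∀ᶠ ρ in nhdsWithin 1 (Set.Iio 1),
        β < (((stdBinorm ρ)[|{p : ℝ × ℝ | z' < p.1}]) {p : ℝ × ℝ | z' < p.2}).toReal :=
      h.eventually (eventually_gt_nhds hβ)
    have h3 : ∀ᶠ ρ in nhdsWithin 1 (Set.Iio 1), ρ ∈ Set.Ioo (0:ℝ) 1 :=
      Ioo_mem_nhdsLT_of_mem (by norm_num : (1:ℝ) ∈ Set.Ioc 0 1)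
    obtain ⟨ρ, hρ1, hρ2⟩ := (h2.and h3).exists
    exact ⟨ρ, hρ2, hρ1⟩

end Aux
end
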